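/- Let α ∈ (0,1), ζ ∈ (0,1), and m, n > 0. If u : (0,T] → ℝ is bounded, nonnegative, and satisfies u(t) ≤ m + n ∫_0^t (t-τ)^(ζ-1) u(τ) dτ for all t ∈ (0,T], then u(t) ≤ m · E_{ζ,1}(n Γ(ζ) t^ζ) for all t ∈ (0,T], where E_{ζ,1}(z) = Σ_{k≥0} z^k / Γ(ζk + 1) is the Mittag-Leffler function. -/

import Mathlib

open MeasureTheory

/-- The one-parameter Mittag-Leffler function `E_{ζ,1}(z) = Σ_{k≥0} z^k / Γ(ζ k + 1)`. -/
noncomputable def mittagLeffler (ζ z : ℝ) : ℝ :=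
  ∑' k : ℕ, z ^ k / Real.Gamma (ζ * k + 1)


lemma beta_intervalIntegrable {a b : ℝ} (ha : 0 < a) (hb : 0 < b) :
    IntervalIntegrable (fun x : ℝ => x ^ (a - 1) * (1 - x) ^ (b - 1)) volume 0 1 := by
  have hC := Complex.betaIntegral_convergent (u := (a : ℂ)) (v := (b : ℂ))
    (by simpa using ha) (by simpa using hb)
  rw [intervalIntegrable_iff_integrableOn_Ioc_of_le (by norm_num)] at hC ⊢
  refine IntegrableOn.congr_fun hC.re ?_ measurableSet_Ioc
  intro x hx
  have hx0 : (0:ℝ) ≤ x := le_of_lt hx.1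
  have hx1 : (0:ℝ) ≤ 1 - x := by linarith [hx.2]
  simp only [Function.comp]
  rw [show (a : ℂ) - 1 = ((a - 1 : ℝ) : ℂ) by push_cast; ring,
      show (b : ℂ) - 1 = ((b - 1 : ℝ) : ℂ) by push_cast; ring,
      ← Complex.ofReal_cpow hx0, show ((1:ℂ) - (x:ℂ)) = ((1 - x : ℝ) : ℂ) by push_cast; ring,
      ← Complex.ofReal_cpow hx1, ← Complex.ofReal_mul]
  exact Complex.ofReal_re _

lemma real_betaIntegral {a b : ℝ} (ha : 0 < a) (hb : 0 < b) :
    ∫ x in (0:ℝ)..1, x ^ (a - 1) * (1 - x) ^ (b - 1) =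
      Real.Gamma a * Real.Gamma b / Real.Gamma (a + b) := by
  have key := Complex.Gamma_mul_Gamma_eq_betaIntegral (s := (a : ℂ)) (t := (b : ℂ))
    (by simpa using ha) (by simpa using hb)
  have hint : Complex.betaIntegral (a : ℂ) (b : ℂ) =
      ((∫ x in (0:ℝ)..1, x ^ (a - 1) * (1 - x) ^ (b - 1) : ℝ) : ℂ) := by
    rw [Complex.betaIntegral, ← intervalIntegral.integral_ofReal]
    refine intervalIntegral.integral_congr fun x hx => ?_
    rw [Set.uIcc_of_le (by norm_num : (0:ℝ) ≤ 1)] at hx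
    have hx0 : (0:ℝ) ≤ x := hx.1
    have hx1 : (0:ℝ) ≤ 1 - x := by linarith [hx.2]
    rw [show (a : ℂ) - 1 = ((a - 1 : ℝ) : ℂ) by push_cast; ring,
      show (b : ℂ) - 1 = ((b - 1 : ℝ) : ℂ) by push_cast; ring,
      ← Complex.ofReal_cpow hx0, show ((1:ℂ) - (x:ℂ)) = ((1 - x : ℝ) : ℂ) by push_cast; ring,
      ← Complex.ofReal_cpow hx1, ← Complex.ofReal_mul]
  rw [hint, ← Complex.ofReal_add, Complex.Gamma_ofReal, Complex.Gamma_ofReal,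
    Complex.Gamma_ofReal, ← Complex.ofReal_mul, ← Complex.ofReal_mul] at key
  have := Complex.ofReal_injective key
  have hab : Real.Gamma (a + b) ≠ 0 := (Real.Gamma_pos_of_pos (by linarith)).ne'
  field_simp
  linarith [this]


lemma scaled_beta_integrable {a b t : ℝ} (ha : 0 < a) (hb : 0 < b) (ht : 0 < t) :
    IntervalIntegrable (fun τ : ℝ => (t - τ) ^ (a - 1) * τ ^ (b - 1)) volume 0 t := by
  have h1 : IntervalIntegrable (fun x : ℝ => (t ^ (a + b - 2)) *
      ((t⁻¹ * x) ^ (b - 1) * (1 - t⁻¹ * x) ^ (a - 1))) volume (0 / t⁻¹) (1 / t⁻¹) :=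
    (((beta_intervalIntegrable hb ha).comp_mul_left (c := t⁻¹)).const_mul _)
  rw [zero_div, one_div, inv_inv] at h1
  rw [intervalIntegrable_iff_integrableOn_Ioc_of_le ht.le] at h1 ⊢
  refine IntegrableOn.congr_fun h1 ?_ measurableSet_Ioc
  intro τ hτ
  dsimp only
  have h2 : (1 : ℝ) - t⁻¹ * τ = (t - τ) / t := by field_simp
  have h3 : t⁻¹ * τ = τ / t := by field_simp
  have hta : t ^ (a-1) ≠ 0 := (Real.rpow_pos_of_pos ht _).ne'
  have htb : t ^ (b-1) ≠ 0 := (Real.rpow_pos_of_pos ht _).ne'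
  rw [h2, h3, Real.div_rpow hτ.1.le ht.le, Real.div_rpow (by linarith [hτ.2] : (0:ℝ) ≤ t - τ) ht.le,
    show a + b - 2 = (a-1) + (b-1) by ring, Real.rpow_add ht]
  field_simp

lemma scaled_betaIntegral {a b t : ℝ} (ha : 0 < a) (hb : 0 < b) (ht : 0 < t) :
    ∫ τ in (0:ℝ)..t, (t - τ) ^ (a - 1) * τ ^ (b - 1) =
      Real.Gamma a * Real.Gamma b / Real.Gamma (a + b) * t ^ (a + b - 1) := by
  have subst := intervalIntegral.integral_comp_mul_left
    (fun τ : ℝ => (t - τ) ^ (a - 1) * τ ^ (b - 1)) (c := t) ht.ne' (a := 0) (b := 1)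
  rw [mul_zero, mul_one] at subst
  have congr1 : ∫ x in (0:ℝ)..1, (t - t * x) ^ (a - 1) * (t * x) ^ (b - 1)
      = ∫ x in (0:ℝ)..1, t ^ (a + b - 2) * (x ^ (b - 1) * (1 - x) ^ (a - 1)) := by
    refine intervalIntegral.integral_congr fun x hx => ?_
    rw [Set.uIcc_of_le (by norm_num : (0:ℝ) ≤ 1)] at hx
    have h1 : t - t * x = t * (1 - x) := by ring
    rw [h1, Real.mul_rpow ht.le (by linarith [hx.2]), Real.mul_rpow ht.le hx.1,
      show a + b - 2 = (a-1) + (b-1) by ring, Real.rpow_add ht]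
    ring
  rw [congr1, intervalIntegral.integral_const_mul, real_betaIntegral hb ha,
    smul_eq_mul, eq_comm, inv_mul_eq_iff_eq_mul₀ ht.ne'] at subst
  rw [subst, show a + b - 1 = 1 + (a + b - 2) by ring, Real.rpow_add ht, Real.rpow_one,
    add_comm b a]
  ring


lemma ml_summable {ζ : ℝ} (hζ : 0 < ζ) {y : ℝ} (hy : 0 ≤ y) :
    Summable (fun k : ℕ => y ^ k / Real.Gamma (ζ * k + 1)) := by
  set a : ℕ → ℝ := fun k => y ^ k / Real.Gamma (ζ * k + 1) with ha
  have hGpos : ∀ k : ℕ, 0 < Real.Gamma (ζ * k + 1) := fun k =>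
    Real.Gamma_pos_of_pos (by positivity)
  have hanneg : ∀ k, 0 ≤ a k := fun k => div_nonneg (pow_nonneg hy k) (hGpos k).le
  obtain ⟨p, hp⟩ : ∃ p : ℕ, 2 ≤ ζ * p := by
    obtain ⟨p, hp⟩ := exists_nat_ge (2 / ζ)
    exact ⟨p, by rw [div_le_iff₀ hζ] at hp; linarith⟩
  have hppos : 0 < p := by
    by_contra h
    push_neg at h
    interval_cases p
    simp at hp; linarith
  obtain ⟨K, hK⟩ : ∃ K : ℕ, 2 * y ^ p ≤ ζ * K + 1 := by
    obtain ⟨K, hK⟩ := exists_nat_ge ((2 * y ^ p) / ζ)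
    exact ⟨K, by rw [div_le_iff₀ hζ] at hK; nlinarith⟩
  -- key decay step
  have key : ∀ k : ℕ, K ≤ k → a (k + p) ≤ a k / 2 := by
    intro k hk
    have hcast : (((k + p : ℕ)) : ℝ) = (k : ℝ) + (p : ℝ) := by push_cast; ring
    have hk0 : (0:ℝ) ≤ ζ * k := mul_nonneg hζ.le (Nat.cast_nonneg k)
    have h1 : ζ * k + 1 + 1 ≤ ζ * ((k + p : ℕ) : ℝ) + 1 := by
      rw [hcast]; nlinarith
    have h2 : (2:ℝ) ≤ ζ * k + 1 + 1 := by linarith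
    have hmono : Real.Gamma (ζ * k + 1 + 1) ≤ Real.Gamma (ζ * ((k + p : ℕ) : ℝ) + 1) := by
      rcases eq_or_lt_of_le h1 with h | h
      · rw [h]
      · exact (Real.Gamma_strictMonoOn_Ici (Set.mem_Ici.mpr h2)
          (Set.mem_Ici.mpr (by linarith)) h).le
    have h3 : Real.Gamma (ζ * k + 1 + 1) = (ζ * k + 1) * Real.Gamma (ζ * k + 1) :=
      Real.Gamma_add_one (by positivity)
    have h4 : (ζ * k + 1) * Real.Gamma (ζ * k + 1) ≤ Real.Gamma (ζ * ((k + p : ℕ) : ℝ) + 1) := by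
      rw [← h3]; exact hmono
    have hyK : 2 * y ^ p ≤ ζ * k + 1 := le_trans hK (by
      have : (K : ℝ) ≤ k := Nat.cast_le.2 hk
      nlinarith)
    have hzk1 : 0 < ζ * k + 1 := by positivity
    have hGbig : 0 < Real.Gamma (ζ * ((k + p : ℕ) : ℝ) + 1) := hGpos (k + p)
    calc a (k + p) = y ^ (k + p) / Real.Gamma (ζ * ((k + p : ℕ) : ℝ) + 1) := rfl
      _ ≤ y ^ (k + p) / ((ζ * k + 1) * Real.Gamma (ζ * k + 1)) := by
          rcases eq_or_lt_of_le (pow_nonneg hy (k + p)) with hy0 | hy0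
          · rw [← hy0]; simp
          · exact (div_le_div_iff_of_pos_left hy0 hGbig (by positivity)).mpr h4
      _ = (y ^ p / (ζ * k + 1)) * a k := by rw [pow_add]; have hG := (hGpos k).ne'; simp only [ha]; field_simp
      _ ≤ (1 / 2) * a k := mul_le_mul_of_nonneg_right
          ((div_le_iff₀ hzk1).mpr (by linarith)) (hanneg k)
      _ = a k / 2 := by ring
  -- geometric bound
  set q : ℝ := (1 / 2 : ℝ) ^ ((p : ℝ)⁻¹) with hq
  have hq0 : 0 < q := Real.rpow_pos_of_pos (by norm_num) _
  have hq1 : q < 1 := Real.rpow_lt_one (by norm_num) (by norm_num)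
    (by positivity)
  have hqp : q ^ p = 1 / 2 := by
    rw [hq, ← Real.rpow_natCast ((1/2 : ℝ) ^ ((p:ℝ)⁻¹)) p, ← Real.rpow_mul (by norm_num),
      inv_mul_cancel₀ (by positivity : (p:ℝ) ≠ 0), Real.rpow_one]
  set M : ℝ := ∑ k ∈ Finset.range (K + p), a k / q ^ k with hM
  have hbase : ∀ k < K + p, a k ≤ M * q ^ k := by
    intro k hk
    have h1 : a k / q ^ k ≤ M :=
      Finset.single_le_sum (f := fun k => a k / q ^ k)
        (fun i _ => div_nonneg (hanneg i) (by positivity)) (Finset.mem_range.2 hk)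
    rw [div_le_iff₀ (by positivity)] at h1
    linarith
  have hbound : ∀ k, a k ≤ M * q ^ k := by
    intro k
    induction k using Nat.strong_induction_on with
    | _ k ih =>
      rcases lt_or_ge k (K + p) with h | h
      · exact hbase k h
      · have hpk : p ≤ k := le_trans (Nat.le_add_left p K) h
        have hkp : k - p + p = k := Nat.sub_add_cancel hpk
        have hKk : K ≤ k - p := by omega
        have h1 : a k ≤ a (k - p) / 2 := by
          have := key (k - p) hKk; rwa [hkp] at this
        have h2 : a (k - p) ≤ M * q ^ (k - p) := ih _ (by omega)
        calc a k ≤ a (k - p) / 2 := h1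
          _ ≤ M * q ^ (k - p) / 2 := by linarith
          _ = M * q ^ (k - p) * q ^ p := by rw [hqp]; ring
          _ = M * q ^ k := by rw [mul_assoc, ← pow_add, hkp]
  exact Summable.of_nonneg_of_le hanneg hbound
    ((summable_geometric_of_lt_one hq0.le hq1).mul_left M)


set_option maxHeartbeats 1000000 in
theorem fractional_gronwall (α ζ m n T : ℝ)
    (hα : α ∈ Set.Ioo (0 : ℝ) 1) (hζ : ζ ∈ Set.Ioo (0 : ℝ) 1)
    (hm : 0 < m) (hn : 0 < n) (hT : 0 < T) (u : ℝ → ℝ)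
    (hbdd : ∃ C : ℝ, ∀ t ∈ Set.Ioc (0 : ℝ) T, |u t| ≤ C)
    (hpos : ∀ t ∈ Set.Ioc (0 : ℝ) T, 0 ≤ u t)
    (hineq : ∀ t ∈ Set.Ioc (0 : ℝ) T,
      u t ≤ m + n * ∫ τ in (0 : ℝ)..t, (t - τ) ^ (ζ - 1) * u τ) :
    ∀ t ∈ Set.Ioc (0 : ℝ) T,
      u t ≤ m * mittagLeffler ζ (n * Real.Gamma ζ * t ^ ζ) := by
  obtain ⟨hζ0, hζ1⟩ := hζ
  obtain ⟨C, hC⟩ := hbdd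
  have hGζ : 0 < Real.Gamma ζ := Real.Gamma_pos_of_pos hζ0
  set G : ℝ := n * Real.Gamma ζ with hGdef
  have hG : 0 < G := mul_pos hn hGζ
  set a : ℕ → ℝ → ℝ := fun k t => G ^ k * t ^ (ζ * k) / Real.Gamma (ζ * k + 1) with hadef
  have hGam : ∀ k : ℕ, 0 < Real.Gamma (ζ * k + 1) := fun k =>
    Real.Gamma_pos_of_pos (by positivity)
  have ha_nonneg : ∀ (k : ℕ) (t : ℝ), 0 ≤ t → 0 ≤ a k t := fun k t ht => by
    have := (hGam k).le
    have : (0:ℝ) ≤ t ^ (ζ * k) := Real.rpow_nonneg ht _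
    positivity
  -- the basic integral identity
  have hI : ∀ (k : ℕ) {t : ℝ}, 0 < t →
      ∫ τ in (0:ℝ)..t, (t - τ) ^ (ζ - 1) * τ ^ (ζ * k) =
        Real.Gamma ζ * Real.Gamma (ζ * k + 1) / Real.Gamma (ζ * (k + 1) + 1)
          * t ^ (ζ * (k + 1)) := by
    intro k t ht
    have h1 := scaled_betaIntegral (a := ζ) (b := ζ * k + 1) hζ0 (by positivity) ht
    have e1 : ζ * (k:ℝ) + 1 - 1 = ζ * k := by ring
    have e2 : ζ + (ζ * k + 1) = ζ * ((k:ℝ) + 1) + 1 := by ring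
    rw [e1, e2] at h1
    rw [show ζ * ((k:ℝ) + 1) + 1 - 1 = ζ * ((k:ℝ) + 1) by ring] at h1
    exact h1
  -- the iteration
  have key : ∀ (k : ℕ), ∀ t ∈ Set.Ioc (0 : ℝ) T,
      u t ≤ m * ∑ j ∈ Finset.range k, a j t + C * a k t := by
    intro k
    induction k with
    | zero =>
      intro t ht
      simp only [Finset.range_zero, Finset.sum_empty, mul_zero, zero_add]
      have : a 0 t = 1 := by
        simp [hadef, Real.Gamma_one, Real.rpow_zero]
      rw [this, mul_one]
      exact le_trans (le_abs_self _) (hC t ht)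
    | succ k ih =>
      intro t ht
      have ht0 : 0 < t := ht.1
      have hC0 : 0 ≤ C := le_trans (abs_nonneg _) (hC t ht)
      -- integrability of each building block
      have hbi : ∀ j : ℕ, IntervalIntegrable
          (fun τ : ℝ => (t - τ) ^ (ζ - 1) * τ ^ (ζ * j)) volume 0 t := by
        intro j
        have := scaled_beta_integrable (a := ζ) (b := ζ * j + 1) hζ0 (by positivity) ht0
        simpa using this
      -- the dominating function
      set g : ℝ → ℝ := fun τ => (t - τ) ^ (ζ - 1) *
        (m * ∑ j ∈ Finset.range k, a j τ + C * a k τ) with hgdef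
      have hg_eq : g = fun τ => (∑ j ∈ Finset.range k,
          (m * (G ^ j / Real.Gamma (ζ * j + 1))) * ((t - τ) ^ (ζ - 1) * τ ^ (ζ * j)))
          + (C * (G ^ k / Real.Gamma (ζ * k + 1))) * ((t - τ) ^ (ζ - 1) * τ ^ (ζ * k)) := by
        funext τ
        simp only [hgdef, hadef]
        rw [mul_add, Finset.mul_sum, Finset.mul_sum]
        congr 1
        · exact Finset.sum_congr rfl fun j _ => by ring
        · ring
      have hsum_int : IntervalIntegrable (fun τ : ℝ => ∑ j ∈ Finset.range k,
          (m * (G ^ j / Real.Gamma (ζ * j + 1))) * ((t - τ) ^ (ζ - 1) * τ ^ (ζ * j)))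
          volume 0 t := by
        have h := IntervalIntegrable.sum (Finset.range k)
          (f := fun (j : ℕ) (τ : ℝ) =>
            (m * (G ^ j / Real.Gamma (ζ * j + 1))) * ((t - τ) ^ (ζ - 1) * τ ^ (ζ * j)))
          (fun j _ => (hbi j).const_mul _)
        rwa [Finset.sum_fn] at h
      have hg_int : IntervalIntegrable g volume 0 t := by
        rw [hg_eq]
        exact hsum_int.add ((hbi k).const_mul _)
      -- monotonicity of the integral
      have hmono : (∫ τ in (0:ℝ)..t, (t - τ) ^ (ζ - 1) * u τ) ≤ ∫ τ in (0:ℝ)..t, g τ := by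
        rw [intervalIntegral.integral_of_le ht0.le, intervalIntegral.integral_of_le ht0.le]
        refine integral_mono_of_nonneg ?_ ?_ ?_
        · refine (ae_restrict_iff' measurableSet_Ioc).2 (Filter.Eventually.of_forall ?_)
          intro τ hτ
          exact mul_nonneg (Real.rpow_nonneg (by linarith [hτ.2]) _)
            (hpos τ ⟨hτ.1, le_trans hτ.2 ht.2⟩)
        · exact (intervalIntegrable_iff_integrableOn_Ioc_of_le ht0.le).1 hg_int
        · refine (ae_restrict_iff' measurableSet_Ioc).2 (Filter.Eventually.of_forall ?_)
          intro τ hτ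
          exact mul_le_mul_of_nonneg_left (ih τ ⟨hτ.1, le_trans hτ.2 ht.2⟩)
            (Real.rpow_nonneg (by linarith [hτ.2]) _)
      -- computing the integral of g
      have hg_val : (∫ τ in (0:ℝ)..t, g τ) =
          (∑ j ∈ Finset.range k, (m * (G ^ j / Real.Gamma (ζ * j + 1))) *
            (Real.Gamma ζ * Real.Gamma (ζ * j + 1) / Real.Gamma (ζ * (j + 1) + 1)
              * t ^ (ζ * (j + 1))))
          + (C * (G ^ k / Real.Gamma (ζ * k + 1))) *
            (Real.Gamma ζ * Real.Gamma (ζ * k + 1) / Real.Gamma (ζ * (k + 1) + 1)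
              * t ^ (ζ * (k + 1))) := by
        rw [hg_eq]
        rw [intervalIntegral.integral_add hsum_int ((hbi k).const_mul _)]
        rw [intervalIntegral.integral_finset_sum fun j _ => (hbi j).const_mul _]
        rw [intervalIntegral.integral_const_mul, hI k ht0]
        congr 1
        exact Finset.sum_congr rfl fun j _ => by
          rw [intervalIntegral.integral_const_mul, hI j ht0]
      -- simplify each term
      have hterm : ∀ j : ℕ, n * ((G ^ j / Real.Gamma (ζ * j + 1)) *
          (Real.Gamma ζ * Real.Gamma (ζ * j + 1) / Real.Gamma (ζ * (j + 1) + 1)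
            * t ^ (ζ * (j + 1)))) = a (j + 1) t := by
        intro j
        have hne := (hGam j).ne'
        simp only [hadef]
        push_cast
        rw [pow_succ]
        field_simp
        ring
      calc u t ≤ m + n * ∫ τ in (0:ℝ)..t, (t - τ) ^ (ζ - 1) * u τ := hineq t ht
        _ ≤ m + n * ∫ τ in (0:ℝ)..t, g τ := by nlinarith [hmono]
        _ = m + (m * ∑ j ∈ Finset.range k, a (j + 1) t + C * a (k + 1) t) := by
            rw [hg_val]
            rw [mul_add, Finset.mul_sum, Finset.mul_sum]
            congr 2
            · exact Finset.sum_congr rfl fun j _ => by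
                rw [← hterm j]; push_cast; ring
            · rw [← hterm k]; push_cast; ring
        _ = m * ∑ j ∈ Finset.range (k + 1), a j t + C * a (k + 1) t := by
            rw [Finset.sum_range_succ']
            have : a 0 t = 1 := by simp [hadef, Real.Gamma_one, Real.rpow_zero]
            rw [this]
            ring
  -- pass to the limit
  intro t ht
  have ht0 : 0 < t := ht.1
  set y : ℝ := G * t ^ ζ with hy
  have hy0 : 0 ≤ y := by positivity
  have hsum : Summable (fun k : ℕ => y ^ k / Real.Gamma (ζ * k + 1)) := ml_summable hζ0 hy0
  have hat : ∀ k : ℕ, a k t = y ^ k / Real.Gamma (ζ * k + 1) := by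
    intro k
    simp only [hadef]
    conv_rhs => rw [hy, mul_pow, ← Real.rpow_natCast (t ^ ζ) k, ← Real.rpow_mul ht0.le]
  have hten : Filter.Tendsto (fun k : ℕ => m * ∑ j ∈ Finset.range k, a j t + C * a k t)
      Filter.atTop (nhds (m * mittagLeffler ζ y + C * 0)) := by
    refine Filter.Tendsto.add ?_ ?_
    · refine Filter.Tendsto.const_mul m ?_
      have h1 := hsum.hasSum.tendsto_sum_nat
      have : (fun k : ℕ => ∑ j ∈ Finset.range k, a j t)
          = fun k : ℕ => ∑ j ∈ Finset.range k, y ^ j / Real.Gamma (ζ * j + 1) := by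
        funext k; exact Finset.sum_congr rfl fun j _ => hat j
      rw [this, mittagLeffler]
      exact h1
    · refine Filter.Tendsto.const_mul C ?_
      have h2 := hsum.tendsto_atTop_zero
      have : (fun k : ℕ => a k t) = fun k : ℕ => y ^ k / Real.Gamma (ζ * k + 1) := by
        funext k; exact hat k
      rw [this]
      exact h2
  rw [mul_zero, add_zero] at hten
  exact ge_of_tendsto' hten fun k => key k t ht
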